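/- Let m ≥ 1, let n > 2(m+1), let A' = {1,…,m+1}, and let p be a probability measure on the symmetric group S_n that is invariant under conjugation. Let E = {σ ∈ S_n : σ(A') ∩ A' = ∅} and assume p(E) > 0. Then for any distinct b_1,…,b_{m+1} ∈ {1,…,n}, the conditional probability p({σ : σ(1)=b_1, …, σ(m+1)=b_{m+1}} | E) equals 0 if some b_i ≤ m+1, and equals (n−2(m+1))!/(n−(m+1))! (the reciprocal of the number of injective maps from {1,…,m+1} into {m+2,…,n}) if all b_i ≥ m+2; in particular it does not depend on the choice of such b_1,…,b_{m+1}. -/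

import Mathlib

noncomputable section

/-- The probability of the event `P` under the probability mass function `p` on `S_n`. -/
def permProb {n : ℕ} (p : Equiv.Perm (Fin n) → ℝ) (P : Equiv.Perm (Fin n) → Prop) : ℝ :=
  ∑ σ, Set.indicator {σ' | P σ'} p σ

private lemma permProb_eq_sum_filter {n : ℕ} (p : Equiv.Perm (Fin n) → ℝ)
    (P : Equiv.Perm (Fin n) → Prop) [DecidablePred P] :
    permProb p P = ∑ σ ∈ Finset.univ.filter P, p σ := by
  rw [Finset.sum_filter]
  unfold permProb
  congr 1; ext σ
  simp [Set.indicator_apply]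

private lemma exists_perm_map {α β : Type*} [Fintype α] [Fintype β] [DecidableEq β]
    (f g : α → β) (hf : Function.Injective f) (hg : Function.Injective g) :
    ∃ τ : Equiv.Perm β, ∀ a, τ (f a) = g a := by
  classical
  let e : {y : β // y ∈ Set.range f} ≃ {y : β // y ∈ Set.range g} :=
    (Equiv.ofInjective f hf).symm.trans (Equiv.ofInjective g hg)
  refine ⟨e.extendSubtype, fun a => ?_⟩
  rw [Equiv.extendSubtype_apply_of_mem e (f a) ⟨a, rfl⟩]
  have h1 : (Equiv.ofInjective f hf).symm ⟨f a, ⟨a, rfl⟩⟩ = a := by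
    rw [Equiv.symm_apply_eq]; rfl
  show ((Equiv.ofInjective g hg) ((Equiv.ofInjective f hf).symm ⟨f a, ⟨a, rfl⟩⟩) : β) = g a
  rw [h1]; rfl

/-- There is a permutation of `Fin n` fixing all `x < m+1`, preserving `m+1 ≤ x`,
and mapping `b k` to `b' k`. -/
private lemma exists_good_perm {m n : ℕ} (b b' : Fin (m + 1) → Fin n)
    (hb : Function.Injective b) (hb' : Function.Injective b')
    (h : ∀ k, m + 1 ≤ (b k : ℕ)) (h' : ∀ k, m + 1 ≤ (b' k : ℕ)) :
    ∃ ρ : Equiv.Perm (Fin n), (∀ x : Fin n, (x : ℕ) < m + 1 → ρ x = x) ∧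
      (∀ x : Fin n, m + 1 ≤ (x : ℕ) → m + 1 ≤ (ρ x : ℕ)) ∧ (∀ k, ρ (b k) = b' k) := by
  classical
  set S := {x : Fin n // ¬ ((x : ℕ) < m + 1)}
  let B : Fin (m + 1) → S := fun k => ⟨b k, by have := h k; omega⟩
  let B' : Fin (m + 1) → S := fun k => ⟨b' k, by have := h' k; omega⟩
  have hB : Function.Injective B := fun k l hkl => hb (congrArg Subtype.val hkl)
  have hB' : Function.Injective B' := fun k l hkl => hb' (congrArg Subtype.val hkl)
  obtain ⟨τ, hτ⟩ := exists_perm_map B B' hB hB'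
  refine ⟨Equiv.Perm.subtypeCongr (Equiv.refl {x : Fin n // (x : ℕ) < m + 1}) τ, ?_, ?_, ?_⟩
  · intro x hx
    rw [Equiv.Perm.subtypeCongr.left_apply (p := fun x : Fin n => (x : ℕ) < m + 1)
      (Equiv.refl _) τ hx]
    rfl
  · intro x hx
    have hx' : ¬ ((x : ℕ) < m + 1) := by omega
    rw [Equiv.Perm.subtypeCongr.right_apply (p := fun x : Fin n => (x : ℕ) < m + 1)
      (Equiv.refl _) τ hx']
    have := (τ ⟨x, hx'⟩).2
    omega
  · intro k
    have hk : ¬ ((b k : ℕ) < m + 1) := by have := h k; omega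
    rw [Equiv.Perm.subtypeCongr.right_apply (p := fun x : Fin n => (x : ℕ) < m + 1)
      (Equiv.refl _) τ hk]
    have : τ ⟨b k, hk⟩ = B' k := hτ k
    rw [this]


private lemma card_subtype_ge {m n : ℕ} (h : m + 1 ≤ n) :
    Fintype.card {x : Fin n // m + 1 ≤ (x : ℕ)} = n - (m + 1) := by
  classical
  have e1 : {x : Fin n // m + 1 ≤ (x : ℕ)} ≃ {x : Fin n // ¬ ((x : ℕ) < m + 1)} :=
    Equiv.subtypeEquivRight (fun x => by omega)
  have e2 : {x : Fin n // (x : ℕ) < m + 1} ≃ Fin (m + 1) :=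
    { toFun := fun x => ⟨x.1.1, x.2⟩
      invFun := fun k => ⟨⟨k.1, by omega⟩, k.2⟩
      left_inv := fun x => by ext; rfl
      right_inv := fun k => rfl }
  rw [Fintype.card_congr e1, Fintype.card_subtype_compl, Fintype.card_congr e2,
    Fintype.card_fin, Fintype.card_fin]

private lemma card_T {m n : ℕ} (h : m + 1 ≤ n) :
    (Finset.univ.filter (fun c : Fin (m + 1) → Fin n =>
      Function.Injective c ∧ ∀ k, m + 1 ≤ (c k : ℕ))).card
      = (n - (m + 1)).descFactorial (m + 1) := by
  classical
  rw [← Fintype.card_subtype]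
  have e : {c : Fin (m + 1) → Fin n // Function.Injective c ∧ ∀ k, m + 1 ≤ (c k : ℕ)}
      ≃ (Fin (m + 1) ↪ {x : Fin n // m + 1 ≤ (x : ℕ)}) :=
    { toFun := fun c => ⟨fun k => ⟨c.1 k, c.2.2 k⟩, fun k l hkl => c.2.1 (congrArg Subtype.val hkl)⟩
      invFun := fun f => ⟨fun k => (f k).1,
        ⟨fun k l hkl => f.injective (Subtype.ext hkl), fun k => (f k).2⟩⟩
      left_inv := fun c => rfl
      right_inv := fun f => by ext k; rfl }
  rw [Fintype.card_congr e, Fintype.card_embedding_eq, Fintype.card_fin, card_subtype_ge h]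

theorem stmt_12 (m n : ℕ) (hm : 1 ≤ m) (hn : 2 * (m + 1) < n)
    (p : Equiv.Perm (Fin n) → ℝ)
    (hpos : ∀ σ, 0 ≤ p σ) (hsum : ∑ σ, p σ = 1)
    (hinv : ∀ σ ρ : Equiv.Perm (Fin n), p (ρ⁻¹ * σ * ρ) = p σ)
    -- E = {σ : σ(A') ∩ A' = ∅} where A' = {1,…,m+1} (0-based: indices < m+1)
    (hE : 0 < permProb p (fun σ => ∀ i : Fin n, (i : ℕ) < m + 1 → m + 1 ≤ (σ i : ℕ)))
    (b : Fin (m + 1) → Fin n) (hb : Function.Injective b) :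
    ((∃ k, (b k : ℕ) < m + 1) →
      permProb p (fun σ => (∀ k : Fin (m + 1), σ (Fin.castLE (by omega) k) = b k) ∧
          (∀ i : Fin n, (i : ℕ) < m + 1 → m + 1 ≤ (σ i : ℕ)))
        / permProb p (fun σ => ∀ i : Fin n, (i : ℕ) < m + 1 → m + 1 ≤ (σ i : ℕ)) = 0) ∧
    ((∀ k, m + 1 ≤ (b k : ℕ)) →
      permProb p (fun σ => (∀ k : Fin (m + 1), σ (Fin.castLE (by omega) k) = b k) ∧
          (∀ i : Fin n, (i : ℕ) < m + 1 → m + 1 ≤ (σ i : ℕ)))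
        / permProb p (fun σ => ∀ i : Fin n, (i : ℕ) < m + 1 → m + 1 ≤ (σ i : ℕ))
      = ((n - 2 * (m + 1)).factorial : ℝ) / ((n - (m + 1)).factorial : ℝ)) := by
  classical
  have hle : m + 1 ≤ n := by omega
  set E : Equiv.Perm (Fin n) → Prop :=
    fun σ => ∀ i : Fin n, (i : ℕ) < m + 1 → m + 1 ≤ (σ i : ℕ) with hEdef
  set Q : (Fin (m + 1) → Fin n) → Equiv.Perm (Fin n) → Prop :=
    fun c σ => (∀ k : Fin (m + 1), σ (Fin.castLE hle k) = c k) ∧ E σ with hQdef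
  -- numerator as a sum
  have hnum_eq : ∀ c : Fin (m + 1) → Fin n,
      permProb p (Q c) = ∑ σ ∈ Finset.univ.filter (Q c), p σ :=
    fun c => permProb_eq_sum_filter p (Q c)
  have hden_eq : permProb p E = ∑ σ ∈ Finset.univ.filter E, p σ :=
    permProb_eq_sum_filter p E
  constructor
  · rintro ⟨k, hk⟩
    have : Finset.univ.filter (Q b) = ∅ := by
      rw [Finset.filter_eq_empty_iff]
      rintro σ - ⟨h1, h2⟩
      have h3 := h2 (Fin.castLE hle k) (by simpa using k.2)
      rw [h1 k] at h3
      omega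
    rw [show permProb p (fun σ => (∀ k : Fin (m + 1), σ (Fin.castLE (by omega) k) = b k) ∧
          (∀ i : Fin n, (i : ℕ) < m + 1 → m + 1 ≤ (σ i : ℕ))) = permProb p (Q b) from rfl,
      hnum_eq b, this]
    simp
  · intro hball
    -- invariance of the numerator
    have key : ∀ c : Fin (m + 1) → Fin n, Function.Injective c → (∀ k, m + 1 ≤ (c k : ℕ)) →
        (∑ σ ∈ Finset.univ.filter (Q c), p σ) = ∑ σ ∈ Finset.univ.filter (Q b), p σ := by
      intro c hc hcall
      obtain ⟨ρ, hfix, hpres, hmap⟩ := exists_good_perm c b hc hb hcall hball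
      have hfix' : ∀ x : Fin n, (x : ℕ) < m + 1 → ρ⁻¹ x = x := by
        intro x hx
        conv_lhs => rw [← hfix x hx]
        exact ρ.symm_apply_apply x
      have hpres' : ∀ x : Fin n, m + 1 ≤ (x : ℕ) → m + 1 ≤ ((ρ⁻¹ x : Fin n) : ℕ) := by
        intro x hx
        by_contra hcon
        have := hfix (ρ⁻¹ x) (by omega)
        rw [show ρ (ρ⁻¹ x) = x from ρ.apply_symm_apply x] at this
        omega
      have hmap' : ∀ k, ρ⁻¹ (b k) = c k := by
        intro k; rw [← hmap k]; exact ρ.symm_apply_apply _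
      refine Finset.sum_bij' (fun σ _ => ρ * σ * ρ⁻¹) (fun σ _ => ρ⁻¹ * σ * ρ) ?_ ?_ ?_ ?_ ?_
      · rintro σ hσ
        rw [Finset.mem_filter] at hσ ⊢
        obtain ⟨-, h1, h2⟩ := hσ
        refine ⟨Finset.mem_univ _, fun k => ?_, fun i hi => ?_⟩
        · have hk : ((Fin.castLE hle k : Fin n) : ℕ) < m + 1 := by simpa using k.2
          simp only [Equiv.Perm.mul_apply]
          rw [hfix' _ hk, h1 k, hmap k]
        · simp only [Equiv.Perm.mul_apply]
          rw [hfix' _ hi]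
          exact hpres _ (h2 i hi)
      · rintro σ hσ
        rw [Finset.mem_filter] at hσ ⊢
        obtain ⟨-, h1, h2⟩ := hσ
        refine ⟨Finset.mem_univ _, fun k => ?_, fun i hi => ?_⟩
        · have hk : ((Fin.castLE hle k : Fin n) : ℕ) < m + 1 := by simpa using k.2
          simp only [Equiv.Perm.mul_apply]
          rw [hfix _ hk, h1 k, hmap' k]
        · simp only [Equiv.Perm.mul_apply]
          rw [hfix _ hi]
          exact hpres' _ (h2 i hi)
      · intro σ _; group
      · intro σ _; group
      · intro σ _
        have := hinv (ρ * σ * ρ⁻¹) ρ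
        rw [show ρ⁻¹ * (ρ * σ * ρ⁻¹) * ρ = σ by group] at this
        exact this
    -- decomposition of the denominator
    set T : Finset (Fin (m + 1) → Fin n) := Finset.univ.filter
      (fun c => Function.Injective c ∧ ∀ k, m + 1 ≤ (c k : ℕ)) with hTdef
    have hmaps : ∀ σ ∈ Finset.univ.filter E,
        (fun k : Fin (m + 1) => σ (Fin.castLE hle k)) ∈ T := by
      intro σ hσ
      rw [Finset.mem_filter] at hσ
      rw [hTdef, Finset.mem_filter]
      refine ⟨Finset.mem_univ _, fun k l hkl => ?_, fun k => ?_⟩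
      · have := σ.injective hkl
        exact Fin.castLE_injective hle this
      · exact hσ.2 _ (by simpa using k.2)
    have hdecomp : (∑ σ ∈ Finset.univ.filter E, p σ)
        = ∑ c ∈ T, ∑ σ ∈ Finset.univ.filter (Q c), p σ := by
      rw [← Finset.sum_fiberwise_of_maps_to hmaps p]
      refine Finset.sum_congr rfl fun c hc => ?_
      congr 1
      rw [Finset.filter_filter]
      apply Finset.filter_congr
      intro σ _
      constructor
      · rintro ⟨hEσ, hfun⟩
        exact ⟨fun k => congrFun hfun k, hEσ⟩
      · rintro ⟨hfun, hEσ⟩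
        exact ⟨hEσ, funext hfun⟩
    have hconst : ∀ c ∈ T, (∑ σ ∈ Finset.univ.filter (Q c), p σ)
        = ∑ σ ∈ Finset.univ.filter (Q b), p σ := by
      intro c hc
      rw [hTdef, Finset.mem_filter] at hc
      exact key c hc.2.1 hc.2.2
    have hden : permProb p E = (T.card : ℝ) * ∑ σ ∈ Finset.univ.filter (Q b), p σ := by
      rw [hden_eq, hdecomp, Finset.sum_congr rfl hconst, Finset.sum_const, nsmul_eq_mul]
    have hcardT : T.card = (n - (m + 1)).descFactorial (m + 1) := card_T hle
    have hfact : (n - 2 * (m + 1)).factorial * (n - (m + 1)).descFactorial (m + 1)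
        = (n - (m + 1)).factorial := by
      have h1 : m + 1 ≤ n - (m + 1) := by omega
      have := Nat.factorial_mul_descFactorial h1
      rwa [show n - (m + 1) - (m + 1) = n - 2 * (m + 1) by omega] at this
    -- finish
    have hnumne : (∑ σ ∈ Finset.univ.filter (Q b), p σ) ≠ 0 := by
      intro h0
      rw [hden, h0, mul_zero] at hE
      exact lt_irrefl _ hE
    have hcardne : (T.card : ℝ) ≠ 0 := by
      intro h0
      rw [hden, h0, zero_mul] at hE
      exact lt_irrefl _ hE
    rw [show permProb p (fun σ => (∀ k : Fin (m + 1), σ (Fin.castLE (by omega) k) = b k) ∧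
          (∀ i : Fin n, (i : ℕ) < m + 1 → m + 1 ≤ (σ i : ℕ))) = permProb p (Q b) from rfl,
      hnum_eq b, hden]
    have hfactR : ((n - 2 * (m + 1)).factorial : ℝ) * (T.card : ℝ)
        = ((n - (m + 1)).factorial : ℝ) := by
      rw [hcardT]
      exact_mod_cast congrArg (Nat.cast (R := ℝ)) hfact
    have hfacne : ((n - (m + 1)).factorial : ℝ) ≠ 0 := Nat.cast_ne_zero.2 (Nat.factorial_ne_zero _)
    rw [mul_comm, ← div_div, div_self hnumne, div_eq_div_iff hcardne hfacne, one_mul, ← hfactR]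

end
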